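/- Let C be a real n×n matrix and P a symmetric real n×n matrix. If P is positive definite and P − Cᵀ P C is positive definite, then every complex eigenvalue λ of C (i.e., every λ ∈ ℂ for which there exists a nonzero complex vector v with (the complexification of) C applied to v equal to λ v) satisfies |λ| < 1. -/

import Mathlib

open Matrix

lemma re_quad_eq' {n : ℕ} (P : Matrix (Fin n) (Fin n) ℝ) (v : Fin n → ℂ) :
    (star v ⬝ᵥ (P.map (fun x : ℝ => (x : ℂ))) *ᵥ v).re
      = (fun i => (v i).re) ⬝ᵥ P *ᵥ (fun i => (v i).re)
        + (fun i => (v i).im) ⬝ᵥ P *ᵥ (fun i => (v i).im) := by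
  simp [dotProduct, mulVec, Complex.re_sum, Finset.mul_sum, Complex.mul_re, Complex.mul_im,
    Finset.sum_add_distrib]

lemma re_quad_pos' {n : ℕ} {P : Matrix (Fin n) (Fin n) ℝ} (hP : P.PosDef)
    (v : Fin n → ℂ) (hv : v ≠ 0) :
    0 < (star v ⬝ᵥ (P.map (fun x : ℝ => (x : ℂ))) *ᵥ v).re := by
  rw [re_quad_eq']
  set x : Fin n → ℝ := fun i => (v i).re with hx
  set y : Fin n → ℝ := fun i => (v i).im with hy
  have hxy : x ≠ 0 ∨ y ≠ 0 := by
    by_contra h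
    push_neg at h
    apply hv
    funext i
    have h1 := congrFun h.1 i
    have h2 := congrFun h.2 i
    simp [hx, hy] at h1 h2
    exact Complex.ext h1 h2
  have hqx : ∀ z : Fin n → ℝ, 0 ≤ z ⬝ᵥ P *ᵥ z := fun z => by
    have := hP.posSemidef.dotProduct_mulVec_nonneg z
    simpa using this
  have hqp : ∀ z : Fin n → ℝ, z ≠ 0 → 0 < z ⬝ᵥ P *ᵥ z := fun z hz => by
    have := hP.dotProduct_mulVec_pos hz
    simpa using this
  rcases hxy with h | h
  · linarith [hqp x h, hqx y]
  · linarith [hqp y h, hqx x]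

theorem lyapunov_posdef_implies_stable {n : ℕ} (hn : 0 < n)
    (C P : Matrix (Fin n) (Fin n) ℝ) (hPsymm : P.IsSymm)
    (hP : P.PosDef) (hLyap : (P - Cᵀ * P * C).PosDef) :
    ∀ (lam : ℂ) (v : Fin n → ℂ), v ≠ 0 →
      (C.map (fun x : ℝ => (x : ℂ))).mulVec v = lam • v → ‖lam‖ < 1 := by
  intro lam v hv heig
  set Pc := P.map (fun x : ℝ => (x : ℂ)) with hPc
  set Cc := C.map (fun x : ℝ => (x : ℂ)) with hCc
  have ha : 0 < (star v ⬝ᵥ Pc *ᵥ v).re := re_quad_pos' hP v hv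
  have hb : 0 < (star v ⬝ᵥ ((P - Cᵀ * P * C).map (fun x : ℝ => (x : ℂ))) *ᵥ v).re :=
    re_quad_pos' hLyap v hv
  -- rewrite the map of the difference
  have hmap : (P - Cᵀ * P * C).map (fun x : ℝ => (x : ℂ))
      = Pc - Ccᵀ * Pc * Cc := by
    have : (fun x : ℝ => (x : ℂ)) = (Complex.ofRealHom : ℝ →+* ℂ) := rfl
    rw [this]
    rw [hPc, hCc]
    simp [Matrix.map_sub, Matrix.map_mul, Matrix.transpose_map]
    rfl
  have hquad : star v ⬝ᵥ (Ccᵀ * Pc * Cc) *ᵥ v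
      = (‖lam‖ : ℂ)^2 * (star v ⬝ᵥ Pc *ᵥ v) := by
    have htr : Ccᵀ = Ccᴴ := by
      ext i j
      simp [hCc, conjTranspose_apply]
    rw [htr]
    have step : star v ⬝ᵥ (Ccᴴ * Pc * Cc) *ᵥ v = star (Cc *ᵥ v) ⬝ᵥ Pc *ᵥ (Cc *ᵥ v) := by
      simp only [star_mulVec, dotProduct_mulVec, vecMul_vecMul]
    rw [step, heig, star_smul, smul_dotProduct, mulVec_smul, dotProduct_smul,
      smul_eq_mul, smul_eq_mul, ← mul_assoc]
    congr 1
    rw [show ((‖lam‖ : ℂ))^2 = ((‖lam‖)^2 : ℝ) by push_cast; ring]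
    rw [Complex.sq_norm, Complex.normSq_eq_conj_mul_self]
    rfl
  have key : (star v ⬝ᵥ ((P - Cᵀ * P * C).map (fun x : ℝ => (x : ℂ))) *ᵥ v).re
      = (1 - (‖lam‖)^2) * (star v ⬝ᵥ Pc *ᵥ v).re := by
    rw [hmap, Matrix.sub_mulVec, dotProduct_sub, hquad]
    rw [Complex.sub_re]
    have : ((‖lam‖ : ℂ)^2 * (star v ⬝ᵥ Pc *ᵥ v)).re
        = (‖lam‖)^2 * (star v ⬝ᵥ Pc *ᵥ v).re := by
      rw [show ((‖lam‖ : ℂ)^2) = ((‖lam‖ ^2 : ℝ) : ℂ) by push_cast; ring]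
      simp [← Complex.ofReal_pow]
    rw [this]; ring
  rw [key] at hb
  have h1 : 0 < 1 - (‖lam‖)^2 := by
    by_contra h
    push_neg at h
    nlinarith
  nlinarith [norm_nonneg lam]
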